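/- arXiv:1001.2949 — 2 statements merged into one kernel-verified Lean document; each statement's English description precedes it below -/
import Mathlib

section
/- Let $k$ be a perfect field of characteristic $p>0$, $R=k[x_1,\dots,x_n]$, and $F:R_s\to R_t$ the Frobenius. Then the map $\phi:R_t\to H=\mathrm{Hom}_{R_s}(R_t,R_s)$ sending the basis monomial $e_{\bar i}$ to the dual basis element $f_{\overline{p-1}-\bar i}$ is an isomorphism of $R_t$-modules. In particular, $\mathrm{Hom}_{R_s}(R_t,R_s)$ is a free $R_t$-module of rank 1. -/
open MvPolynomial TensorProduct

noncomputable section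

variable (p n : ℕ) [Fact p.Prime] (k : Type*) [Field k] [CharP k p] [PerfectField k]

/-- The source copy of the polynomial ring. -/
abbrev Rs := MvPolynomial (Fin n) k

/-- The target copy of the polynomial ring (`p` is a phantom parameter recording that we will
view it as an `Rs`-algebra via the Frobenius). -/
def Rt (_ : ℕ) := MvPolynomial (Fin n) k

instance : CommRing (Rt n k p) := inferInstanceAs (CommRing (MvPolynomial (Fin n) k))

/-- The identity of the underlying ring, viewed as a map from the source copy to the target. -/
def toRt : Rs n k →+* Rt n k p := RingHom.id (MvPolynomial (Fin n) k)

/-- The Frobenius map from the source copy to the target copy. -/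
def frobTo : Rs n k →+* Rt n k p := (toRt p n k).comp (frobenius (MvPolynomial (Fin n) k) p)

instance : Algebra (Rs n k) (Rt n k p) := (frobTo p n k).toAlgebra

instance : NeZero p := ⟨(Fact.out : p.Prime).ne_zero⟩

/-- The monomial basis elements `x₁^{i₁} ⋯ xₙ^{iₙ}`, `0 ≤ iⱼ < p`. -/
def eMon (i : Fin n → Fin p) : Rt n k p := toRt p n k (∏ j, X j ^ (i j : ℕ))

/-- The multi-index `(p-1, …, p-1)`. -/
def topIdx : Fin n → Fin p := fun _ => (0 : Fin p).rev

/-- The complementary multi-index `p-1 - ī`. -/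
def revIdx (i : Fin n → Fin p) : Fin n → Fin p := fun j => (i j).rev

theorem stmt4 (b : Module.Basis (Fin n → Fin p) (Rs n k) (Rt n k p))
    (hb : ∀ i, b i = eMon p n k i) :
    Function.Bijective (Module.Basis.constr b ℕ fun i => b.coord (revIdx p n i)) ∧
      (∀ (r' r x : Rt n k p),
        (Module.Basis.constr b ℕ fun i => b.coord (revIdx p n i)) (r' * r) x =
          (Module.Basis.constr b ℕ fun i => b.coord (revIdx p n i)) r (r' * x)) := by
  classical
  have hp : p.Prime := Fact.out
  set φ := Module.Basis.constr b ℕ fun i => b.coord (revIdx p n i) with hφ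
  -- the key coordinate computation
  have hmul : ∀ i j' : Fin n → Fin p,
      (b.coord (topIdx p n)) (b i * b j') = if revIdx p n i = j' then 1 else 0 := by
    intro i j'
    set s : Fin n → ℕ := fun j => (i j : ℕ) + (j' j : ℕ) with hs
    have hsle : ∀ j, s j ≤ (p - 1) + (p - 1) := by
      intro j
      have h1 := (i j).is_lt
      have h2 := (j' j).is_lt
      simp only [hs]
      omega
    set c : Fin n → ℕ := fun j => if s j < p then 0 else 1 with hc
    set m : Fin n → Fin p := fun j =>
      if h : s j < p then ⟨s j, h⟩
      else ⟨s j - p, by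
        have := hsle j
        have h1 : 1 ≤ p := hp.one_le
        omega⟩ with hm
    have hsplit : ∀ j, s j = c j * p + (m j : ℕ) := by
      intro j
      have h1 : 1 ≤ p := hp.one_le
      by_cases h : s j < p
      · simp [hc, hm, h]
      · have hcj : c j = 1 := by simp [hc, h]
        have hmj : (m j : ℕ) = s j - p := by simp [hm, h]
        rw [hcj, hmj]
        omega
    have hprod : b i * b j' = ((∏ j, X j ^ c j : MvPolynomial (Fin n) k)) • b m := by
      rw [hb i, hb j', hb m]
      show eMon p n k i * eMon p n k j' =
        ((∏ j, X j ^ c j : MvPolynomial (Fin n) k)) • eMon p n k m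
      have hsmul : ∀ (a : Rs n k) (x : Rt n k p), a • x = toRt p n k (a ^ p) * x := by
        intro a x
        rw [Algebra.smul_def]
        rfl
      rw [hsmul]
      show toRt p n k (∏ j, X j ^ (i j : ℕ)) * toRt p n k (∏ j, X j ^ (j' j : ℕ)) =
        toRt p n k ((∏ j, X j ^ c j) ^ p) * toRt p n k (∏ j, X j ^ (m j : ℕ))
      rw [← map_mul, ← map_mul]
      congr 1
      rw [← Finset.prod_mul_distrib, ← Finset.prod_pow, ← Finset.prod_mul_distrib]
      apply Finset.prod_congr rfl
      intro j _
      rw [← pow_add, ← pow_mul, ← pow_add, ← hsplit j]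
    rw [hprod, map_smul, Module.Basis.coord_apply, Module.Basis.repr_self, Finsupp.single_apply,
      smul_eq_mul]
    by_cases hcase : revIdx p n i = j'
    · have hsval : ∀ j, s j = p - 1 := by
        intro j
        have h1 : 1 ≤ p := hp.one_le
        have hlt : (i j : ℕ) < p := (i j).is_lt
        have : (j' j : ℕ) = p - 1 - (i j : ℕ) := by
          rw [← hcase]
          simp only [revIdx, Fin.val_rev]
          omega
        simp only [hs]
        omega
      have hslt : ∀ j, s j < p := by
        intro j
        have h1 : 1 ≤ p := hp.one_le
        rw [hsval j]; omega
      have hmtop : m = topIdx p n := by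
        funext j
        have := hslt j
        simp only [hm, topIdx, dif_pos this]
        ext
        simp [Fin.val_rev, hsval j]
      have hc0 : ∀ j, c j = 0 := by
        intro j; simp [hc, hslt j]
      rw [if_pos hmtop, if_pos hcase]
      have : (∏ j, X j ^ c j : MvPolynomial (Fin n) k) = 1 := by
        apply Finset.prod_eq_one
        intro j _
        rw [hc0 j, pow_zero]
      rw [this, mul_one]
    · have hmne : m ≠ topIdx p n := by
        intro hmtop
        apply hcase
        funext j
        have hmj : (m j : ℕ) = p - 1 := by
          rw [congrFun hmtop j]
          simp [topIdx, Fin.val_rev]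
        have hsj : s j = p - 1 := by
          by_cases h : s j < p
          · have : (m j : ℕ) = s j := by simp [hm, h]
            omega
          · have : (m j : ℕ) = s j - p := by simp [hm, h]
            have := hsle j
            have h1 : 1 ≤ p := hp.one_le
            omega
        have hlt : (i j : ℕ) < p := (i j).is_lt
        have h1 : 1 ≤ p := hp.one_le
        have : (j' j : ℕ) = p - 1 - (i j : ℕ) := by
          simp only [hs] at hsj
          omega
        simp only [revIdx]
        ext
        simp only [Fin.val_rev, this]
        omega
      rw [if_neg hmne, if_neg hcase, mul_zero]
  -- φ as a "multiplication then top coordinate" map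
  have key : ∀ r x : Rt n k p, φ r x = b.coord (topIdx p n) (r * x) := by
    have heq : φ = (LinearMap.mul (Rs n k) (Rt n k p)).compr₂ (b.coord (topIdx p n)) := by
      apply b.ext
      intro i
      apply b.ext
      intro j'
      rw [hφ, Module.Basis.constr_basis]
      simp only [LinearMap.compr₂_apply, LinearMap.mul_apply']
      rw [hmul i j', Module.Basis.coord_apply, Module.Basis.repr_self, Finsupp.single_apply]
      by_cases h : revIdx p n i = j'
      · rw [if_pos h.symm, if_pos h]
      · rw [if_neg (Ne.symm h), if_neg h]
    intro r x
    rw [heq]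
    rfl
  constructor
  · -- bijectivity via identification with a linear equivalence onto the dual basis
    have hinv : Function.Involutive (revIdx p n) := by
      intro i
      funext j
      simp [revIdx, Fin.rev_rev]
    set e : (Fin n → Fin p) ≃ (Fin n → Fin p) := hinv.toPerm with he
    set L := b.equiv b.dualBasis e with hL
    have hφL : φ = L.toLinearMap := by
      apply b.ext
      intro i
      rw [hφ, Module.Basis.constr_basis, hL]
      simp only [LinearEquiv.coe_coe]
      rw [Module.Basis.equiv_apply, Module.Basis.coe_dualBasis]
      rfl
    rw [hφL]
    exact L.bijective
  · intro r' r x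
    rw [key, key]
    exact congrArg _ (by ring)
end
end

section
/- Let $k$ be a perfect field of characteristic $p>0$, $R=k[x_1,\dots,x_n]$, $F:R_s\to R_t$ the Frobenius, $M$ an $R_t$-module and $N$ an $R_s$-module. An $R_s$-linear map $g:M\to F^*(N)=R_t\otimes_{R_s}N$, written as $g=\oplus_{\bar i}(e_{\bar i}\otimes g_{\bar i})$ with $g_{\bar i}:F_*(M)\to N$ $R_s$-linear, is $R_t$-linear if and only if $g_{\bar i}(m)=g_{\overline{p-1}}(e_{\overline{p-1}-\bar i}\, m)$ for every multi-index $\bar i$ with $0\le i_j<p$ and every $m\in M$. -/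
open MvPolynomial TensorProduct

noncomputable section

variable (p n : ℕ) [Fact p.Prime] (k : Type*) [Field k] [CharP k p] [PerfectField k]

set_option linter.unusedSectionVars false

namespace Stmt5Aux

/-- The exponent multi-index of a tuple. -/
def ιF (i : Fin n → Fin p) : Fin n →₀ ℕ := Finsupp.equivFunOnFinite.symm fun l => (i l : ℕ)

@[simp] lemma ιF_apply (i : Fin n → Fin p) (l : Fin n) : ιF p n i l = i l := rfl

lemma frobTo_apply (s : Rs n k) : frobTo p n k s = s ^ p := rfl

lemma smul_Rt (s : Rs n k) (t : Rt n k p) : s • t = frobTo p n k s * t := by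
  rw [Algebra.smul_def, RingHom.algebraMap_toAlgebra]

lemma pow_p_eq_expand (c : MvPolynomial (Fin n) k) :
    c ^ p = expand p (map (frobenius k p) c) := by
  have h : (frobenius (MvPolynomial (Fin n) k) p) =
      ((expand p : MvPolynomial (Fin n) k →ₐ[k] MvPolynomial (Fin n) k) :
        MvPolynomial (Fin n) k →+* MvPolynomial (Fin n) k).comp (map (frobenius k p)) := by
    apply MvPolynomial.ringHom_ext
    · intro a
      simp only [RingHom.coe_comp, RingHom.coe_coe, Function.comp_apply, map_C, expand_C,
        frobenius_def]
      rw [C_pow]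
    · intro l
      simp only [RingHom.coe_comp, RingHom.coe_coe, Function.comp_apply, map_X, expand_X,
        frobenius_def]
  calc c ^ p = frobenius (MvPolynomial (Fin n) k) p c := rfl
    _ = expand p (map (frobenius k p) c) := by rw [h]; rfl

lemma expand_monomial_smul (d : Fin n →₀ ℕ) (a : k) :
    expand p (monomial d a) = monomial (p • d) a := by
  have hp : (p : ℕ) ≠ 0 := (Fact.out : p.Prime).ne_zero
  have hC : (monomial (p • d)) a = C a * monomial (p • d) (1:k) := by
    rw [C_mul_monomial, mul_one]
  rw [MvPolynomial.expand_monomial, hC, ← prod_X_pow_eq_monomial]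

lemma coeff_expand_smul (q : MvPolynomial (Fin n) k) (d : Fin n →₀ ℕ) :
    coeff (p • d) (expand p q) = coeff d q := by
  have hp : (p : ℕ) ≠ 0 := (Fact.out : p.Prime).ne_zero
  conv_lhs => rw [← support_sum_monomial_coeff q]
  rw [map_sum, coeff_sum]
  simp only [expand_monomial_smul, coeff_monomial]
  rw [Finset.sum_eq_single d]
  · rw [if_pos rfl]
  · intro b _ hbd
    rw [if_neg]
    intro hcon
    apply hbd
    ext l
    have := congrFun (congrArg (fun f : Fin n →₀ ℕ => (f : Fin n → ℕ)) hcon) l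
    simp only [Finsupp.coe_smul, Pi.smul_apply, smul_eq_mul] at this
    exact Nat.eq_of_mul_eq_mul_left (Nat.pos_of_ne_zero hp) this
  · intro hd
    rw [if_pos rfl, notMem_support_iff.mp hd]

lemma coeff_expand_of_not_dvd (q : MvPolynomial (Fin n) k) (m : Fin n →₀ ℕ)
    (h : ∃ l, ¬ p ∣ m l) : coeff m (expand p q) = 0 := by
  obtain ⟨l, hl⟩ := h
  conv_lhs => rw [← support_sum_monomial_coeff q]
  rw [map_sum, coeff_sum]
  apply Finset.sum_eq_zero
  intro d _
  rw [expand_monomial_smul, coeff_monomial, if_neg]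
  intro hcon
  apply hl
  rw [← hcon]
  exact ⟨d l, by simp⟩

lemma prodX_fun_eq_monomial (d : Fin n → ℕ) :
    (∏ l, (X l : MvPolynomial (Fin n) k) ^ d l)
      = monomial (Finsupp.equivFunOnFinite.symm d) 1 := by
  rw [← prod_X_pow_eq_monomial]
  symm
  apply Finset.prod_subset (Finset.subset_univ _)
  intro x _ hx
  rw [Finsupp.notMem_support_iff] at hx
  simp only [Finsupp.equivFunOnFinite_symm_apply_apply] at hx
  simp [hx]

lemma eMon_eq (i : Fin n → Fin p) : eMon p n k i = monomial (ιF p n i) (1 : k) := by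
  show (∏ l, (X l : MvPolynomial (Fin n) k) ^ (i l : ℕ)) = monomial (ιF p n i) (1:k)
  exact prodX_fun_eq_monomial n k _

lemma nat_nondvd {a b D : ℕ} (ha : a < p) (hb : b < p) (hab : a ≠ b) (hle : b ≤ p * D + a) :
    ¬ p ∣ (p * D + a - b) := by
  rintro ⟨m, hm⟩
  apply hab
  have key : p * D + a = p * m + b := by omega
  have h1 : (p * D + a) % p = a := by
    rw [Nat.mul_add_mod, Nat.mod_eq_of_lt ha]
  have h2 : (p * m + b) % p = b := by
    rw [Nat.mul_add_mod, Nat.mod_eq_of_lt hb]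
  rw [← h1, key, h2]

lemma sum_pow_mul_eq_zero {g : (Fin n → Fin p) → MvPolynomial (Fin n) k}
    (h : ∑ i, (g i) ^ p * monomial (ιF p n i) (1:k) = 0) : ∀ i, g i = 0 := by
  intro i₀
  ext d
  rw [coeff_zero]
  apply (frobenius k p).injective
  rw [map_zero]
  have hzero : ∀ i : Fin n → Fin p, i ≠ i₀ →
      coeff (p • d + ιF p n i₀) ((g i) ^ p * monomial (ιF p n i) (1:k)) = 0 := by
    intro i hi
    rw [coeff_mul_monomial', pow_p_eq_expand]
    split_ifs with hle
    · rw [coeff_expand_of_not_dvd, zero_mul]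
      obtain ⟨l, hl⟩ := Function.ne_iff.mp hi
      refine ⟨l, ?_⟩
      have hle' : (ιF p n i) l ≤ (p • d + ιF p n i₀) l := hle l
      rw [Finsupp.tsub_apply, Finsupp.add_apply, Finsupp.smul_apply, smul_eq_mul,
        ιF_apply, ιF_apply]
      rw [Finsupp.add_apply, Finsupp.smul_apply, smul_eq_mul, ιF_apply, ιF_apply] at hle'
      exact nat_nondvd p (i₀ l).isLt (i l).isLt
        (fun hv => hl (Fin.ext hv.symm)) hle'
    · rfl
  have hmain : coeff (p • d + ιF p n i₀) ((g i₀) ^ p * monomial (ιF p n i₀) (1:k))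
      = frobenius k p (coeff d (g i₀)) := by
    rw [coeff_mul_monomial, mul_one, pow_p_eq_expand, coeff_expand_smul, coeff_map]
  calc frobenius k p (coeff d (g i₀))
      = coeff (p • d + ιF p n i₀) ((g i₀) ^ p * monomial (ιF p n i₀) (1:k)) := hmain.symm
    _ = ∑ i, coeff (p • d + ιF p n i₀) ((g i) ^ p * monomial (ιF p n i) (1:k)) :=
        (Finset.sum_eq_single i₀ (fun b _ hb => hzero b hb)
          (fun hh => absurd (Finset.mem_univ i₀) hh)).symm
    _ = coeff (p • d + ιF p n i₀) (∑ i, (g i) ^ p * monomial (ιF p n i) (1:k)) :=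
        (coeff_sum _ _ _).symm
    _ = 0 := by rw [h, coeff_zero]

lemma linIndep : LinearIndependent (Rs n k) (eMon p n k) := by
  rw [Fintype.linearIndependent_iff]
  intro g hg
  apply sum_pow_mul_eq_zero p n k
  simp only [smul_Rt, eMon_eq] at hg
  exact hg

lemma spans : ⊤ ≤ Submodule.span (Rs n k) (Set.range (eMon p n k)) := by
  haveI : ExpChar k p := .prime Fact.out
  intro f _
  have hmono : ∀ (d : Fin n →₀ ℕ) (a : k),
      (monomial d a : MvPolynomial (Fin n) k) ∈
        Submodule.span (Rs n k) (Set.range (eMon p n k)) := by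
    intro d a
    have hp : 0 < p := (Fact.out : p.Prime).pos
    set i : Fin n → Fin p := fun l => ⟨d l % p, Nat.mod_lt _ hp⟩ with hi
    set s : Rs n k := monomial (d.mapRange (· / p) (by simp)) ((frobeniusEquiv k p).symm a)
      with hs
    have heq : (monomial d a : MvPolynomial (Fin n) k) = s • eMon p n k i := by
      rw [smul_Rt, eMon_eq]
      show (monomial d a : MvPolynomial (Fin n) k) = s ^ p * monomial (ιF p n i) (1:k)
      rw [hs, monomial_pow, monomial_mul, mul_one]
      have hidx : (p • Finsupp.mapRange (· / p) (by simp) d + ιF p n i) = d := by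
        ext l
        simp only [Finsupp.add_apply, Finsupp.smul_apply, Finsupp.mapRange_apply,
          smul_eq_mul, ιF_apply, hi]
        exact Nat.div_add_mod _ _
      rw [hidx, ← frobenius_def, frobenius_apply_frobeniusEquiv_symm]
    rw [heq]
    exact (Submodule.span (Rs n k) (Set.range (eMon p n k))).smul_mem s
      (Submodule.subset_span ⟨i, rfl⟩)
  have hsum : ((MvPolynomial.support f).sum fun d =>
      (monomial d (coeff d f) : MvPolynomial (Fin n) k)) ∈
        Submodule.span (Rs n k) (Set.range (eMon p n k)) :=
    Submodule.sum_mem _ (fun d _ => hmono d _)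
  exact (congrArg (fun x : Rt n k p => x ∈ Submodule.span (Rs n k) (Set.range (eMon p n k)))
    (support_sum_monomial_coeff (f : MvPolynomial (Fin n) k))).mp hsum

/-- The basis of `Rt` over `Rs` given by the monomials `eMon`. -/
def bMon : Module.Basis (Fin n → Fin p) (Rs n k) (Rt n k p) := Module.Basis.mk (linIndep p n k) (spans p n k)

variable (N : Type*) [AddCommGroup N] [Module (Rs n k) N]

/-- The coordinate projection of the tensor product along a basis element. -/
def compT (a : Fin n → Fin p) : (Rt n k p ⊗[Rs n k] N) →ₗ[Rs n k] N :=
  (Finsupp.lapply a) ∘ₗ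
    ((TensorProduct.congr (bMon p n k).repr (LinearEquiv.refl (Rs n k) N)).trans
      (TensorProduct.finsuppScalarLeft (Rs n k) N (Fin n → Fin p))).toLinearMap

lemma compT_tmul (a b : Fin n → Fin p) (x : N) :
    compT p n k N a (eMon p n k b ⊗ₜ[Rs n k] x) = if b = a then x else 0 := by
  have hb : eMon p n k b = bMon p n k b := (Module.Basis.mk_apply _ _ _).symm
  rw [hb]
  show (TensorProduct.finsuppScalarLeft (Rs n k) N (Fin n → Fin p))
      ((TensorProduct.congr (bMon p n k).repr (LinearEquiv.refl (Rs n k) N))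
        (bMon p n k b ⊗ₜ[Rs n k] x)) a = _
  rw [TensorProduct.congr_tmul, Module.Basis.repr_self, LinearEquiv.refl_apply,
    TensorProduct.finsuppScalarLeft_apply_tmul_apply, Finsupp.single_apply]
  split_ifs <;> simp

lemma tensor_ext {x y : Rt n k p ⊗[Rs n k] N}
    (h : ∀ a, compT p n k N a x = compT p n k N a y) : x = y := by
  apply ((TensorProduct.congr (bMon p n k).repr (LinearEquiv.refl (Rs n k) N)).trans
      (TensorProduct.finsuppScalarLeft (Rs n k) N (Fin n → Fin p))).injective
  ext a
  exact h a

lemma tensor_twist (c : Rs n k) (t : Rt n k p) (x : N) :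
    (frobTo p n k c * t) ⊗ₜ[Rs n k] x = t ⊗ₜ[Rs n k] (c • x) := by
  rw [← smul_Rt, TensorProduct.smul_tmul]

/-- The carry coefficient in the product of two basis monomials. -/
def cex (i j : Fin n → Fin p) : Rs n k :=
  ∏ l, X l ^ (if p ≤ (i l : ℕ) + (j l : ℕ) then 1 else 0)

lemma prodX_mul (d e : Fin n → ℕ) :
    (∏ l, (X l : MvPolynomial (Fin n) k) ^ d l) * (∏ l, (X l : MvPolynomial (Fin n) k) ^ e l)
      = ∏ l, (X l : MvPolynomial (Fin n) k) ^ (d l + e l) := by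
  rw [← Finset.prod_mul_distrib]
  exact Finset.prod_congr rfl fun l _ => (pow_add _ _ _).symm

lemma prodX_pow (d : Fin n → ℕ) :
    (∏ l, (X l : MvPolynomial (Fin n) k) ^ d l) ^ p
      = ∏ l, (X l : MvPolynomial (Fin n) k) ^ (p * d l) := by
  rw [← Finset.prod_pow]
  exact Finset.prod_congr rfl fun l _ => by rw [← pow_mul, mul_comm]

lemma eMon_mul (i j : Fin n → Fin p) :
    eMon p n k i * eMon p n k j = frobTo p n k (cex p n k i j) * eMon p n k (i + j) := by
  show (∏ l, (X l : MvPolynomial (Fin n) k) ^ (i l : ℕ)) *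
      (∏ l, (X l : MvPolynomial (Fin n) k) ^ (j l : ℕ))
    = (∏ l, (X l : MvPolynomial (Fin n) k) ^ (if p ≤ (i l : ℕ) + (j l : ℕ) then 1 else 0)) ^ p *
      (∏ l, (X l : MvPolynomial (Fin n) k) ^ (((i + j) l : ℕ)))
  rw [prodX_mul, prodX_pow, prodX_mul]
  apply Finset.prod_congr rfl
  intro l _
  congr 1
  have ha := (i l).isLt
  have hb := (j l).isLt
  have hval : (((i + j) l : ℕ)) = ((i l : ℕ) + (j l : ℕ)) % p := by
    simp [Pi.add_apply, Fin.val_add]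
  rw [hval]
  split_ifs with hc
  · have hmod : ((i l : ℕ) + (j l : ℕ)) % p = (i l : ℕ) + (j l : ℕ) - p := by
      rw [Nat.mod_eq_sub_mod hc, Nat.mod_eq_of_lt (by omega)]
    omega
  · rw [Nat.mod_eq_of_lt (by omega)]
    omega

lemma key_identity (i j : Fin n → Fin p) :
    frobTo p n k (cex p n k (i - j) j) * eMon p n k (revIdx p n (i - j))
      = eMon p n k (revIdx p n i) * eMon p n k j := by
  show (∏ l, (X l : MvPolynomial (Fin n) k) ^
        (if p ≤ (((i - j) l : ℕ)) + (j l : ℕ) then 1 else 0)) ^ p *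
      (∏ l, (X l : MvPolynomial (Fin n) k) ^ ((revIdx p n (i - j) l : ℕ)))
    = (∏ l, (X l : MvPolynomial (Fin n) k) ^ ((revIdx p n i l : ℕ))) *
      (∏ l, (X l : MvPolynomial (Fin n) k) ^ (j l : ℕ))
  rw [prodX_pow, prodX_mul, prodX_mul]
  apply Finset.prod_congr rfl
  intro l _
  congr 1
  have ha := (i l).isLt
  have hb := (j l).isLt
  have hsub : (((i - j) l : ℕ)) = (p - (j l : ℕ) + (i l : ℕ)) % p := by
    simp [Pi.sub_apply, Fin.sub_def]
  have hrev1 : ((revIdx p n (i - j) l : ℕ)) = p - ((((i - j) l : ℕ)) + 1) := by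
    simp [revIdx, Fin.val_rev]
  have hrev2 : ((revIdx p n i l : ℕ)) = p - ((i l : ℕ) + 1) := by
    simp [revIdx, Fin.val_rev]
  rw [hrev1, hrev2, hsub]
  rcases le_or_gt (j l : ℕ) (i l : ℕ) with h | h
  · have hm : (p - (j l : ℕ) + (i l : ℕ)) % p = (i l : ℕ) - (j l : ℕ) := by
      have h1 : p - (j l : ℕ) + (i l : ℕ) = p + ((i l : ℕ) - (j l : ℕ)) := by omega
      rw [h1, Nat.add_mod_left, Nat.mod_eq_of_lt (by omega)]
    rw [hm, if_neg (by omega)]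
    omega
  · have hm : (p - (j l : ℕ) + (i l : ℕ)) % p = p - (j l : ℕ) + (i l : ℕ) :=
      Nat.mod_eq_of_lt (by omega)
    rw [hm, if_pos (by omega)]
    omega

lemma rev_add_eq_top (i j : Fin n → Fin p) :
    revIdx p n i + j = topIdx p n ↔ j = i := by
  constructor
  · intro h
    funext l
    have hl := congrFun h l
    simp only [Pi.add_apply, revIdx, topIdx] at hl
    have hv := congrArg Fin.val hl
    rw [Fin.val_add, Fin.val_rev, Fin.val_rev] at hv
    rw [Fin.val_zero] at hv
    have ha := (i l).isLt
    have hb := (j l).isLt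
    have hp : 0 < p := (Fact.out : p.Prime).pos
    apply Fin.ext
    rcases le_or_gt p ((p - ((i l : ℕ) + 1)) + (j l : ℕ)) with hc | hc
    · rw [Nat.mod_eq_sub_mod hc, Nat.mod_eq_of_lt (by omega)] at hv
      omega
    · rw [Nat.mod_eq_of_lt hc] at hv
      omega
  · rintro rfl
    funext l
    simp only [Pi.add_apply, revIdx, topIdx]
    apply Fin.ext
    rw [Fin.val_add, Fin.val_rev, Fin.val_rev, Fin.val_zero]
    have ha := (j l).isLt
    have hp : 0 < p := (Fact.out : p.Prime).pos
    rw [Nat.mod_eq_of_lt (by omega)]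
    omega

lemma cex_rev_self (i : Fin n → Fin p) : cex p n k (revIdx p n i) i = 1 := by
  unfold cex
  apply Finset.prod_eq_one
  intro l _
  have ha := (i l).isLt
  have hp : 0 < p := (Fact.out : p.Prime).pos
  rw [if_neg, pow_zero]
  simp only [revIdx, Fin.val_rev]
  omega

end Stmt5Aux

theorem stmt5 (M : Type*) [AddCommGroup M] [Module (Rt n k p) M]
    (N : Type*) [AddCommGroup N] [Module (Rs n k) N] :
    letI : Module (Rs n k) M := Module.compHom M (frobTo p n k)
    ∀ g' : (Fin n → Fin p) → (M →ₗ[Rs n k] N),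
      (∀ (r' : Rt n k p) (m : M),
          (∑ i, eMon p n k i ⊗ₜ[Rs n k] g' i (r' • m)) =
            r' • ∑ i, eMon p n k i ⊗ₜ[Rs n k] g' i m) ↔
        (∀ (i : Fin n → Fin p) (m : M), g' i m = g' (topIdx p n) (eMon p n k (revIdx p n i) • m)) := by
  intro g'
  letI : Module (Rs n k) M := Module.compHom M (frobTo p n k)
  constructor
  · -- linearity implies the component relations
    intro L i m
    have L' := L (eMon p n k (revIdx p n i)) m
    rw [Finset.smul_sum] at L'
    simp only [TensorProduct.smul_tmul', smul_eq_mul, Stmt5Aux.eMon_mul,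
      Stmt5Aux.tensor_twist] at L'
    have h1 := congrArg (Stmt5Aux.compT p n k N (topIdx p n)) L'
    simp only [map_sum, Stmt5Aux.compT_tmul, Stmt5Aux.rev_add_eq_top] at h1
    rw [Finset.sum_ite_eq' Finset.univ, Finset.sum_ite_eq' Finset.univ] at h1
    simp only [Finset.mem_univ, if_true, Stmt5Aux.cex_rev_self, one_smul] at h1
    exact h1.symm
  · -- the component relations imply linearity
    intro H r' m
    have hr : r' ∈ Submodule.span (Rs n k) (Set.range (eMon p n k)) :=
      Stmt5Aux.spans p n k (Submodule.mem_top)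
    induction hr using Submodule.span_induction with
    | mem x hx =>
      obtain ⟨j, rfl⟩ := hx
      rw [Finset.smul_sum]
      simp only [TensorProduct.smul_tmul', smul_eq_mul]
      have hcomm : ∀ i : Fin n → Fin p, eMon p n k j * eMon p n k i =
          frobTo p n k (Stmt5Aux.cex p n k i j) * eMon p n k (i + j) := by
        intro i
        rw [mul_comm, Stmt5Aux.eMon_mul]
      simp only [hcomm, Stmt5Aux.tensor_twist]
      have hre : (∑ i, eMon p n k (i + j) ⊗ₜ[Rs n k] (Stmt5Aux.cex p n k i j • g' i m))
          = ∑ a, eMon p n k a ⊗ₜ[Rs n k] (Stmt5Aux.cex p n k (a - j) j • g' (a - j) m) := by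
        apply Fintype.sum_equiv (Equiv.addRight j)
        intro i
        simp [Equiv.coe_addRight, add_sub_cancel_right]
      rw [hre]
      apply Finset.sum_congr rfl
      intro a _
      congr 1
      rw [H a (eMon p n k j • m), H (a - j) m, ← map_smul]
      congr 1
      rw [smul_smul]
      have hsM : ∀ (c : Rs n k) (x : M), c • x = frobTo p n k c • x := fun c x => rfl
      rw [hsM, smul_smul, ← Stmt5Aux.key_identity p n k a j]
    | zero =>
      simp
    | add x y hx hy ihx ihy =>
      simp only [add_smul, map_add, TensorProduct.tmul_add, Finset.sum_add_distrib, ihx, ihy]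
    | smul s x hx ih =>
      rw [Stmt5Aux.smul_Rt]
      simp only [mul_smul]
      have hM : ∀ (y : M), frobTo p n k s • y = s • y := fun y => rfl
      have htw : ∀ (z : Rt n k p ⊗[Rs n k] N), frobTo p n k s • z = s • z := by
        intro z
        rw [← RingHom.algebraMap_toAlgebra (frobTo p n k)]
        exact algebraMap_smul (Rt n k p) s z
      simp only [hM, map_smul, TensorProduct.tmul_smul, htw]
      rw [← Finset.smul_sum, ih, Finset.smul_sum]
end
end
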